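/- With a² + r² = 1, r > 0, 0 < a < 1, w = 1/r, the curve I(γ)(s) = ( (r/2)[ sin(w(a+1)s)/(w(a+1)) + sin(w(a−1)s)/(w(a−1)) ], (r/2)[ −cos(w(a+1)s)/(w(a+1)) + cos(w(a−1)s)/(w(a−1)) ], r·sin(aws) ) satisfies ‖I(γ)(s)‖ = 1 for all s ∈ ℝ, i.e. it lies on the unit sphere. -/

import Mathlib

noncomputable def vec3 (x y z : ℝ) : EuclideanSpace ℝ (Fin 3) := WithLp.toLp 2 ![x, y, z]

theorem stmt_7 (a r w : ℝ) (ha : 0 < a) (ha1 : a < 1) (hr : 0 < r) (hw : w = 1 / r)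
    (h1 : a ^ 2 + r ^ 2 = 1)
    (Iγ : ℝ → EuclideanSpace ℝ (Fin 3))
    (hIγ : ∀ s, Iγ s = vec3
      (r / 2 * (Real.sin (w * (a + 1) * s) / (w * (a + 1))
        + Real.sin (w * (a - 1) * s) / (w * (a - 1))))
      (r / 2 * (-Real.cos (w * (a + 1) * s) / (w * (a + 1))
        + Real.cos (w * (a - 1) * s) / (w * (a - 1))))
      (r * Real.sin (a * w * s))) :
    ∀ s : ℝ, ‖Iγ s‖ = 1 := by
  intro s
  have hr0 : r ≠ 0 := ne_of_gt hr
  have hw0 : w = r⁻¹ := by rw [hw]; ring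
  have hwa1 : w * (a + 1) ≠ 0 := by rw [hw0]; positivity
  have hwa2 : w * (a - 1) ≠ 0 := by
    rw [hw0]
    have h' : a - 1 ≠ 0 := by intro h; linarith [sub_eq_zero.mp h]
    exact mul_ne_zero (inv_ne_zero hr0) h'
  have hprod : (w * (a + 1)) * (w * (a - 1)) = -1 := by
    rw [hw0]
    field_simp
    linear_combination h1
  have hinv1 : (w * (a + 1))⁻¹ = -(w * (a - 1)) := by
    exact inv_eq_of_mul_eq_one_right (by linear_combination -hprod)
  have hinv2 : (w * (a - 1))⁻¹ = -(w * (a + 1)) := by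
    exact inv_eq_of_mul_eq_one_right (by linear_combination -hprod)
  set c1 := Real.cos (w * (a + 1) * s)
  set s1 := Real.sin (w * (a + 1) * s)
  set c2 := Real.cos (w * (a - 1) * s)
  set s2 := Real.sin (w * (a - 1) * s)
  set c0 := Real.cos (a * w * s)
  set s0 := Real.sin (a * w * s)
  have hadd : c1 * c2 - s1 * s2 = Real.cos (w * (a + 1) * s + w * (a - 1) * s) :=
    (Real.cos_add _ _).symm
  have harg : w * (a + 1) * s + w * (a - 1) * s = 2 * (a * w * s) := by ring
  have hpy0 : s0 ^ 2 + c0 ^ 2 = 1 := Real.sin_sq_add_cos_sq _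
  have hc2 : Real.cos (2 * (a * w * s)) = 1 - 2 * s0 ^ 2 := by
    rw [Real.cos_two_mul']; linarith
  rw [harg, hc2] at hadd
  have h12 : s1 ^ 2 + c1 ^ 2 = 1 := Real.sin_sq_add_cos_sq _
  have h22 : s2 ^ 2 + c2 ^ 2 = 1 := Real.sin_sq_add_cos_sq _
  have hwr : w * r = 1 := by rw [hw0]; field_simp
  rw [hIγ s]
  rw [EuclideanSpace.norm_eq, Real.sqrt_eq_one]
  simp only [vec3, Fin.sum_univ_three, Matrix.cons_val_zero, Matrix.cons_val_one,
    Matrix.head_cons, Matrix.cons_val_two, Matrix.tail_cons, Real.norm_eq_abs, sq_abs]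
  simp only [div_eq_mul_inv, hinv1, hinv2]
  linear_combination (r^2/4) * (w*(a-1))^2 * h12 + (r^2/4) * (w*(a+1))^2 * h22
    - (r^2/2) * ((w*(a+1))*(w*(a-1))) * hadd + r^2 * s0^2 * hprod + (w*r+1) * hwr
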